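/- Assume Condition (*). Then each C-edge of G is part of at most one drum: for every i in ZMod (2n) there is at most one drum {{u, v}, {u+1, v+1}} formed by edges of G whose pair of C-edges {{u, u+1}, {v, v+1}} contains {i, i+1}. -/
import Mathlib


/-- A perfect matching of `G`: a set of edges of `G` such that every vertex
lies in exactly one edge of the set. -/
def IsPerfectMatching {V : Type*} (G : SimpleGraph V) (M : Set (Sym2 V)) : Prop :=
  M ⊆ G.edgeSet ∧ ∀ v : V, ∃! e : Sym2 V, e ∈ M ∧ v ∈ e

/-- `c` is a PMValid `k`-edge-colouring of `G`: it colours the edges of `G` with colours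
in `{1, …, k}`, every perfect matching of `G` is monochromatic under `c`, and every
colour class contains a perfect matching. -/
def PMValid {V : Type*} (G : SimpleGraph V) (c : Sym2 V → ℕ) (k : ℕ) : Prop :=
  (∀ e ∈ G.edgeSet, c e ∈ Finset.Icc 1 k) ∧
  (∀ M : Set (Sym2 V), IsPerfectMatching G M → ∀ e ∈ M, ∀ e' ∈ M, c e = c e') ∧
  (∀ i ∈ Finset.Icc 1 k, ∃ M : Set (Sym2 V), IsPerfectMatching G M ∧ ∀ e ∈ M, c e = i)

/-- `G` is matching covered: every edge lies in some perfect matching. -/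
def MatchingCovered {V : Type*} (G : SimpleGraph V) : Prop :=
  ∀ e ∈ G.edgeSet, ∃ M : Set (Sym2 V), IsPerfectMatching G M ∧ e ∈ M

/-- `e` is a C-edge: an edge of the distinguished Hamiltonian cycle `0, 1, …, 2n-1`
on `ZMod (2n)`, i.e. `e = {i, i+1}` for some `i`. -/
def IsCEdge (n : ℕ) (e : Sym2 (ZMod (2 * n))) : Prop :=
  ∃ i : ZMod (2 * n), e = s(i, i + 1)

/-- `e` is a legal edge: it joins two vertices of the same parity
(the parity of the residue is well defined since the modulus `2n` is even). -/
def IsLegal (n : ℕ) (e : Sym2 (ZMod (2 * n))) : Prop :=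
  ∃ a b : ZMod (2 * n), e = s(a, b) ∧ a.val % 2 = b.val % 2

/-- `k` lies on the arc strictly between `i` and `j` in clockwise (increasing) order,
i.e. `k ∈ {i+1, i+2, …, j-1}`. -/
def InArc (n : ℕ) (i j k : ZMod (2 * n)) : Prop :=
  0 < (k - i).val ∧ (k - i).val < (j - i).val

/-- Edges `e = {a, b}` and `e'` cross: `e'` has one endpoint in `P(e)` (the arc strictly
between `a` and `b`) and its other endpoint in `P'(e)` (the arc strictly between `b` and `a`). -/
def Crosses (n : ℕ) (e e' : Sym2 (ZMod (2 * n))) : Prop :=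
  ∃ a b x y : ZMod (2 * n), e = s(a, b) ∧ e' = s(x, y) ∧ InArc n a b x ∧ InArc n b a y

/-- `{e, e'}` is a drum: an unordered pair of crossing legal edges of the form
`{u, v}` and `{u+1, v+1}`. -/
def IsDrum (n : ℕ) (e e' : Sym2 (ZMod (2 * n))) : Prop :=
  IsLegal n e ∧ IsLegal n e' ∧ Crosses n e e' ∧
  ∃ u v : ZMod (2 * n),
    (e = s(u, v) ∧ e' = s(u + 1, v + 1)) ∨ (e' = s(u, v) ∧ e = s(u + 1, v + 1))

/-- Condition (*): `n ≥ 3`, `G` (on vertex set `ZMod (2n)`) contains every C-edge,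
`G` is matching covered, `c` is a PMValid 2-edge-colouring of `G` with colours
red (= 1) and blue (= 2), and the C-edges are coloured alternately:
the edge `{i, i+1}` is red when `i` is odd and blue when `i` is even. -/
def CondStar (n : ℕ) (G : SimpleGraph (ZMod (2 * n))) (c : Sym2 (ZMod (2 * n)) → ℕ) : Prop :=
  3 ≤ n ∧ (∀ i : ZMod (2 * n), G.Adj i (i + 1)) ∧ MatchingCovered G ∧ PMValid G c 2 ∧
  ∀ i : ZMod (2 * n), c (s(i, i + 1)) = if i.val % 2 = 1 then 1 else 2

/-- `f` is one of the two C-edges `{u, u+1}`, `{v, v+1}` of the drum `{e, e'}`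
with `{e, e'} = {{u, v}, {u+1, v+1}}`. -/
def DrumCEdges (n : ℕ) (e e' f : Sym2 (ZMod (2 * n))) : Prop :=
  ∃ u v : ZMod (2 * n),
    ((e = s(u, v) ∧ e' = s(u + 1, v + 1)) ∨ (e' = s(u, v) ∧ e = s(u + 1, v + 1))) ∧
    (f = s(u, u + 1) ∨ f = s(v, v + 1))


section Helpers
variable {N : ℕ} [NeZero N]

private lemma cast_val_eq (x : ZMod N) : ((x.val : ℕ) : ZMod N) = x :=
  ZMod.natCast_rightInverse x

private lemma eq_add_of_val (i x : ZMod N) : x = i + (((x - i).val : ℕ) : ZMod N) := by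
  rw [cast_val_eq]; ring

private lemma shift_up (i x : ZMod N) (t : ℕ) (h : (x - i).val = t) (h2 : t + 1 < N) :
    (x + 1 - i).val = t + 1 := by
  have hx : x + 1 - i = (((t + 1 : ℕ)) : ZMod N) := by
    have : x - i = ((t : ℕ) : ZMod N) := by rw [← h, cast_val_eq]
    push_cast
    rw [← this]; ring
  rw [hx, ZMod.val_cast_of_lt h2]

private lemma shift_down (i x : ZMod N) (t : ℕ) (h : (x - i).val = t) (h1 : 1 ≤ t) :
    (x - 1 - i).val = t - 1 := by
  have htN : t < N := h ▸ ZMod.val_lt _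
  have hx : x - 1 - i = (((t - 1 : ℕ)) : ZMod N) := by
    have h2 : x - i = ((t : ℕ) : ZMod N) := by rw [← h, cast_val_eq]
    have h3 : ((t : ℕ) : ZMod N) = ((t - 1 : ℕ) : ZMod N) + 1 := by
      conv_lhs => rw [show t = t - 1 + 1 by omega]
      push_cast
      ring
    rw [show x - 1 - i = (x - i) - 1 by ring, h2, h3]; ring
  rw [hx, ZMod.val_cast_of_lt (by omega)]

private lemma parity_add (hN2 : N % 2 = 0) (x : ZMod N) (k : ℕ) :
    (x + (k : ZMod N)).val % 2 = (x.val + k) % 2 := by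
  rw [ZMod.val_add, ZMod.val_natCast]
  have hd : (2 : ℕ) ∣ N := Nat.dvd_of_mod_eq_zero hN2
  have h1 := Nat.mod_mod_of_dvd (x.val + k % N) hd
  have h2 := Nat.mod_mod_of_dvd k hd
  set u := k % N with hu
  set w := (x.val + u) % N with hw
  omega

private lemma pm_of_inv {V : Type*} (G : SimpleGraph V) (m : V → V)
    (hinv : ∀ v, m (m v) = v) (hadj : ∀ v, G.Adj v (m v)) :
    IsPerfectMatching G {e | ∃ v, e = s(v, m v)} := by
  constructor
  · rintro e ⟨v, rfl⟩
    exact G.mem_edgeSet.mpr (hadj v)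
  · intro v
    refine ⟨s(v, m v), ⟨⟨v, rfl⟩, Sym2.mem_mk_left _ _⟩, ?_⟩
    rintro e ⟨⟨w, rfl⟩, hv⟩
    rcases Sym2.mem_iff.mp hv with h | h
    · rw [h]
    · rw [h, hinv, Sym2.eq_swap]

end Helpers
/-- The partner function of the explicit perfect matching used in the drum argument. -/
private def drumFun (N : ℕ) [NeZero N] (i : ZMod N) (A B : ℕ) (x : ZMod N) : ZMod N :=
  if (x - i).val = 0 then i + (A : ZMod N)
  else if (x - i).val = A then i
  else if (x - i).val = 1 then i + (B : ZMod N) + 1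
  else if (x - i).val = B + 1 then i + 1
  else if (x - i).val ≤ A ∨ B + 1 ≤ (x - i).val then
    (if (x - i).val % 2 = 0 then x + 1 else x - 1)
  else (if (x - i).val % 2 = 1 then x + 1 else x - 1)

private lemma drumFun_eval {N : ℕ} [NeZero N] (i : ZMod N) (A B : ℕ) (x : ZMod N) (t : ℕ)
    (h : (x - i).val = t) :
    drumFun N i A B x =
      (if t = 0 then i + (A : ZMod N) else if t = A then i
       else if t = 1 then i + (B : ZMod N) + 1
       else if t = B + 1 then i + 1
       else if t ≤ A ∨ B + 1 ≤ t then (if t % 2 = 0 then x + 1 else x - 1)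
       else (if t % 2 = 1 then x + 1 else x - 1)) := by
  subst h; rfl

private lemma key {N : ℕ} [NeZero N] (hN6 : 6 ≤ N) (hN2 : N % 2 = 0)
    (G : SimpleGraph (ZMod N)) (c : Sym2 (ZMod N) → ℕ)
    (hC : ∀ j : ZMod N, G.Adj j (j + 1))
    (hmono : ∀ M : Set (Sym2 (ZMod N)), IsPerfectMatching G M → ∀ e ∈ M, ∀ e' ∈ M, c e = c e')
    (halt : ∀ j : ZMod N, c s(j, j + 1) = if j.val % 2 = 1 then 1 else 2)
    (i : ZMod N) (A B t0 : ℕ)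
    (h2A : A % 2 = 0) (h2B : B % 2 = 0) (hA2 : 2 ≤ A) (hAB : A ≤ B) (hBN : B ≤ N - 2)
    (ht0 : t0 ≠ 0 ∧ t0 ≠ 1 ∧ t0 ≠ A ∧ t0 ≠ B + 1 ∧ t0 + 1 < N ∧
      ((t0 % 2 = 0 ∧ (t0 ≤ A ∨ B + 1 ≤ t0)) ∨ (t0 % 2 = 1 ∧ A < t0 ∧ t0 ≤ B)))
    (hadjA : G.Adj i (i + (A : ZMod N)))
    (hadjB : G.Adj (i + 1) (i + (B : ZMod N) + 1)) :
    c s(i, i + (A : ZMod N)) = if (i.val + t0) % 2 = 1 then 1 else 2 := by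
  set m : ZMod N → ZMod N := drumFun N i A B with hmdef
  have hAN : A < N := by omega
  have hB1N : B + 1 < N := by omega
  -- val computations for the special points
  have hv0 : (i - i).val = 0 := by rw [sub_self, ZMod.val_zero]
  have hvA : ((i + (A : ZMod N)) - i).val = A := by
    rw [add_sub_cancel_left, ZMod.val_cast_of_lt hAN]
  have hv1 : ((i + 1) - i).val = 1 := by
    rw [add_sub_cancel_left]
    have : ((1 : ℕ) : ZMod N) = (1 : ZMod N) := by push_cast; rfl
    rw [← this, ZMod.val_cast_of_lt (by omega)]
  have hvB1 : ((i + (B : ZMod N) + 1) - i).val = B + 1 := by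
    have : i + (B : ZMod N) + 1 - i = (((B + 1 : ℕ)) : ZMod N) := by push_cast; ring
    rw [this, ZMod.val_cast_of_lt hB1N]
  -- evaluations at special points
  have hmi : m i = i + (A : ZMod N) := by rw [hmdef, drumFun_eval i A B i 0 hv0]; simp
  have hma : m (i + (A : ZMod N)) = i := by
    rw [hmdef, drumFun_eval i A B _ A hvA, if_neg (by omega), if_pos rfl]
  have hmi1 : m (i + 1) = i + (B : ZMod N) + 1 := by
    rw [hmdef, drumFun_eval i A B _ 1 hv1, if_neg (by omega), if_neg (by omega), if_pos rfl]
  have hmb1 : m (i + (B : ZMod N) + 1) = i + 1 := by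
    rw [hmdef, drumFun_eval i A B _ (B + 1) hvB1, if_neg (by omega), if_neg (by omega),
      if_neg (by omega), if_pos rfl]
  -- the main case analysis
  have hmain : ∀ x : ZMod N, G.Adj x (m x) ∧ m (m x) = x := by
    intro x
    obtain ⟨t, ht⟩ : ∃ t, (x - i).val = t := ⟨_, rfl⟩
    have htN : t < N := ht ▸ ZMod.val_lt _
    have hx : x = i + ((t : ℕ) : ZMod N) := by rw [← ht]; exact eq_add_of_val i x
    by_cases ht0' : t = 0
    · have hx0 : x = i := by rw [hx, ht0']; simp
      rw [hx0, hmi, hma]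
      exact ⟨hadjA, rfl⟩
    · by_cases htA : t = A
      · have hxA : x = i + (A : ZMod N) := by rw [hx, htA]
        rw [hxA, hma, hmi]
        exact ⟨hadjA.symm, rfl⟩
      · by_cases ht1 : t = 1
        · have hx1 : x = i + 1 := by rw [hx, ht1]; push_cast; ring
          rw [hx1, hmi1, hmb1]
          exact ⟨hadjB, rfl⟩
        · by_cases htB1 : t = B + 1
          · have hxB1 : x = i + (B : ZMod N) + 1 := by rw [hx, htB1]; push_cast; ring
            rw [hxB1, hmb1, hmi1]
            exact ⟨hadjB.symm, rfl⟩
          · -- generic points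
            by_cases hreg : t ≤ A ∨ B + 1 ≤ t
            · by_cases hpar : t % 2 = 0
              · have h1 : m x = x + 1 := by
                  rw [hmdef, drumFun_eval i A B x t ht, if_neg ht0', if_neg htA, if_neg ht1,
                    if_neg htB1, if_pos hreg, if_pos hpar]
                have ht' : (x + 1 - i).val = t + 1 := shift_up i x t ht (by omega)
                have h2 : m (x + 1) = x + 1 - 1 := by
                  rw [hmdef, drumFun_eval i A B _ (t + 1) ht', if_neg (by omega),
                    if_neg (by omega), if_neg (by omega), if_neg (by omega),
                    if_pos (by omega), if_neg (by omega)]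
                have h3 : x + 1 - 1 = x := by ring
                rw [h1, h2, h3]
                exact ⟨hC x, rfl⟩
              · have h1 : m x = x - 1 := by
                  rw [hmdef, drumFun_eval i A B x t ht, if_neg ht0', if_neg htA, if_neg ht1,
                    if_neg htB1, if_pos hreg, if_neg hpar]
                have ht' : (x - 1 - i).val = t - 1 := shift_down i x t ht (by omega)
                have h2 : m (x - 1) = x - 1 + 1 := by
                  rw [hmdef, drumFun_eval i A B _ (t - 1) ht', if_neg (by omega),
                    if_neg (by omega), if_neg (by omega), if_neg (by omega),
                    if_pos (by omega), if_pos (by omega)]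
                have h3 : x - 1 + 1 = x := by ring
                have hadjx : G.Adj x (x - 1) := by
                  have := hC (x - 1)
                  rw [h3] at this
                  exact this.symm
                rw [h1, h2, h3]
                exact ⟨hadjx, rfl⟩
            · by_cases hpar : t % 2 = 1
              · have h1 : m x = x + 1 := by
                  rw [hmdef, drumFun_eval i A B x t ht, if_neg ht0', if_neg htA, if_neg ht1,
                    if_neg htB1, if_neg hreg, if_pos hpar]
                have ht' : (x + 1 - i).val = t + 1 := shift_up i x t ht (by omega)
                have h2 : m (x + 1) = x + 1 - 1 := by
                  rw [hmdef, drumFun_eval i A B _ (t + 1) ht', if_neg (by omega),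
                    if_neg (by omega), if_neg (by omega), if_neg (by omega),
                    if_neg (by omega), if_neg (by omega)]
                have h3 : x + 1 - 1 = x := by ring
                rw [h1, h2, h3]
                exact ⟨hC x, rfl⟩
              · have h1 : m x = x - 1 := by
                  rw [hmdef, drumFun_eval i A B x t ht, if_neg ht0', if_neg htA, if_neg ht1,
                    if_neg htB1, if_neg hreg, if_neg hpar]
                have ht' : (x - 1 - i).val = t - 1 := shift_down i x t ht (by omega)
                have h2 : m (x - 1) = x - 1 + 1 := by
                  rw [hmdef, drumFun_eval i A B _ (t - 1) ht', if_neg (by omega),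
                    if_neg (by omega), if_neg (by omega), if_neg (by omega),
                    if_neg (by omega), if_pos (by omega)]
                have h3 : x - 1 + 1 = x := by ring
                have hadjx : G.Adj x (x - 1) := by
                  have := hC (x - 1)
                  rw [h3] at this
                  exact this.symm
                rw [h1, h2, h3]
                exact ⟨hadjx, rfl⟩
  -- the matching
  have hpm := pm_of_inv G m (fun v => (hmain v).2) (fun v => (hmain v).1)
  have hvt0 : ((i + (t0 : ZMod N)) - i).val = t0 := by
    rw [add_sub_cancel_left, ZMod.val_cast_of_lt (by omega)]
  have hmt0 : m (i + (t0 : ZMod N)) = i + (t0 : ZMod N) + 1 := by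
    rw [hmdef, drumFun_eval i A B _ t0 hvt0, if_neg ht0.1, if_neg ht0.2.2.1,
      if_neg ht0.2.1, if_neg ht0.2.2.2.1]
    rcases ht0.2.2.2.2.2 with ⟨hp, hr⟩ | ⟨hp, hr1, hr2⟩
    · rw [if_pos hr, if_pos hp]
    · rw [if_neg (by omega), if_pos hp]
  have he1 : s(i, i + (A : ZMod N)) ∈ {e | ∃ v, e = s(v, m v)} := ⟨i, by rw [hmi]⟩
  have he2 : s(i + (t0 : ZMod N), i + (t0 : ZMod N) + 1) ∈ {e | ∃ v, e = s(v, m v)} :=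
    ⟨i + (t0 : ZMod N), by rw [hmt0]⟩
  have hcc := hmono _ hpm _ he1 _ he2
  rw [halt (i + (t0 : ZMod N)), parity_add hN2 i t0] at hcc
  exact hcc

private lemma legal_parity {n : ℕ} {x y : ZMod (2 * n)} (h : IsLegal n s(x, y)) :
    x.val % 2 = y.val % 2 := by
  obtain ⟨p, q, hpq, hpar⟩ := h
  rcases Sym2.eq_iff.mp hpq with ⟨rfl, rfl⟩ | ⟨rfl, rfl⟩
  · exact hpar
  · exact hpar.symm

private lemma maincontr {N : ℕ} [NeZero N] (hN6 : 6 ≤ N) (hN2 : N % 2 = 0)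
    (G : SimpleGraph (ZMod N)) (c : Sym2 (ZMod N) → ℕ)
    (hC : ∀ j : ZMod N, G.Adj j (j + 1))
    (hmono : ∀ M : Set (Sym2 (ZMod N)), IsPerfectMatching G M → ∀ e ∈ M, ∀ e' ∈ M, c e = c e')
    (halt : ∀ j : ZMod N, c s(j, j + 1) = if j.val % 2 = 1 then 1 else 2)
    (i a b : ZMod N)
    (ha : G.Adj i a) (ha' : G.Adj (i + 1) (a + 1)) (hb' : G.Adj (i + 1) (b + 1))
    (hpa : a.val % 2 = i.val % 2) (hpb : b.val % 2 = i.val % 2)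
    (hlt : (a - i).val < (b - i).val) : False := by
  set A := (a - i).val with hA
  set B := (b - i).val with hB
  have hia : a = i + (A : ZMod N) := eq_add_of_val i a
  have hib : b = i + (B : ZMod N) := eq_add_of_val i b
  have hBltN : B < N := ZMod.val_lt _
  have hAeven : A % 2 = 0 := by
    have := parity_add hN2 i A
    rw [← hia] at this
    omega
  have hBeven : B % 2 = 0 := by
    have := parity_add hN2 i B
    rw [← hib] at this
    omega
  have hA0 : A ≠ 0 := by
    intro h0
    have : a - i = 0 := (ZMod.val_eq_zero _).mp h0
    exact ha.ne (sub_eq_zero.mp this).symm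
  have hA2 : 2 ≤ A := by omega
  have hBN : B ≤ N - 2 := by omega
  -- first matching: both legal edges of the drum at i, a
  obtain ⟨t1, ht1⟩ : ∃ t, t % 2 = 0 ∧ t ≠ 0 ∧ t ≠ 1 ∧ t ≠ A ∧ t ≠ A + 1 ∧ t + 1 < N ∧
      (t ≤ A ∨ A + 1 ≤ t) := by
    by_cases hA2' : A = 2
    · exact ⟨4, by omega⟩
    · exact ⟨2, by omega⟩
  have hadjA : G.Adj i (i + (A : ZMod N)) := by rw [← hia]; exact ha
  have hadjA' : G.Adj (i + 1) (i + (A : ZMod N) + 1) := by rw [← hia]; exact ha'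
  have hadjB' : G.Adj (i + 1) (i + (B : ZMod N) + 1) := by rw [← hib]; exact hb'
  have k1 := key hN6 hN2 G c hC hmono halt i A A t1 hAeven hAeven hA2 le_rfl (by omega)
    ⟨ht1.2.1, ht1.2.2.1, ht1.2.2.2.1, ht1.2.2.2.2.1, ht1.2.2.2.2.2.1,
      Or.inl ⟨ht1.1, by omega⟩⟩ hadjA hadjA'
  have k2 := key hN6 hN2 G c hC hmono halt i A B (A + 1) hAeven hBeven hA2 (le_of_lt hlt)
    hBN ⟨by omega, by omega, by omega, by omega, by omega, Or.inr ⟨by omega, by omega, by omega⟩⟩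
    hadjA hadjB'
  rw [k1] at k2
  have h1 : t1 % 2 = 0 := ht1.1
  split_ifs at k2 <;> omega

private lemma two_ne_zero_zmod {n : ℕ} [NeZero (2 * n)] (hn : 3 ≤ n) :
    (2 : ZMod (2 * n)) ≠ 0 := by
  intro h
  have h2 : ((2 : ℕ) : ZMod (2 * n)) = 0 := by push_cast; exact h
  have := ZMod.val_cast_of_lt (show 2 < 2 * n by omega)
  rw [h2, ZMod.val_zero] at this
  omega

private lemma extract_drum {n : ℕ} [NeZero (2 * n)] (hn : 3 ≤ n)
    {e₁ e₂ : Sym2 (ZMod (2 * n))} {i : ZMod (2 * n)}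
    (h : DrumCEdges n e₁ e₂ s(i, i + 1)) :
    ∃ a, (e₁ = s(i, a) ∧ e₂ = s(i + 1, a + 1)) ∨ (e₂ = s(i, a) ∧ e₁ = s(i + 1, a + 1)) := by
  obtain ⟨u, v, hp, hf⟩ := h
  have h2 : (2 : ZMod (2 * n)) ≠ 0 := two_ne_zero_zmod hn
  rcases hf with hf | hf
  · rcases Sym2.eq_iff.mp hf with ⟨rfl, _⟩ | ⟨h1, h1'⟩
    · exact ⟨v, hp⟩
    · exfalso
      exact h2 (by linear_combination h1' - h1)
  · rcases Sym2.eq_iff.mp hf with ⟨rfl, _⟩ | ⟨h1, h1'⟩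
    · refine ⟨u, ?_⟩
      rcases hp with ⟨h1, h2'⟩ | ⟨h1, h2'⟩
      · left; rw [h1, h2']; exact ⟨Sym2.eq_swap, Sym2.eq_swap⟩
      · right; rw [h1, h2']; exact ⟨Sym2.eq_swap, Sym2.eq_swap⟩
    · exfalso
      exact h2 (by linear_combination h1' - h1)

theorem statement_5 (n : ℕ) (G : SimpleGraph (ZMod (2 * n)))
    (c : Sym2 (ZMod (2 * n)) → ℕ) (h : CondStar n G c) :
    ∀ i : ZMod (2 * n), ∀ e₁ e₂ f₁ f₂ : Sym2 (ZMod (2 * n)),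
      e₁ ∈ G.edgeSet → e₂ ∈ G.edgeSet → f₁ ∈ G.edgeSet → f₂ ∈ G.edgeSet →
      IsDrum n e₁ e₂ → IsDrum n f₁ f₂ →
      DrumCEdges n e₁ e₂ (s(i, i + 1)) → DrumCEdges n f₁ f₂ (s(i, i + 1)) →
      (e₁ = f₁ ∧ e₂ = f₂) ∨ (e₁ = f₂ ∧ e₂ = f₁) := by
  obtain ⟨hn3, hC, hmc, hPMV, halt⟩ := h
  have hmono := hPMV.2.1
  haveI : NeZero (2 * n) := ⟨by omega⟩
  have hN6 : 6 ≤ 2 * n := by omega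
  have hN2 : (2 * n) % 2 = 0 := by omega
  intro i e₁ e₂ f₁ f₂ he₁ he₂ hf₁ hf₂ hd1 hd2 hdc1 hdc2
  obtain ⟨a, hA⟩ := extract_drum hn3 hdc1
  obtain ⟨b, hB⟩ := extract_drum hn3 hdc2
  by_cases hab : a = b
  · subst hab
    rcases hA with ⟨h1, h2⟩ | ⟨h1, h2⟩ <;> rcases hB with ⟨h3, h4⟩ | ⟨h3, h4⟩
    · exact Or.inl ⟨h1.trans h3.symm, h2.trans h4.symm⟩
    · exact Or.inr ⟨h1.trans h3.symm, h2.trans h4.symm⟩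
    · exact Or.inr ⟨h2.trans h4.symm, h1.trans h3.symm⟩
    · exact Or.inl ⟨h2.trans h4.symm, h1.trans h3.symm⟩
  · exfalso
    have hEa : s(i, a) ∈ G.edgeSet ∧ s(i + 1, a + 1) ∈ G.edgeSet := by
      rcases hA with ⟨h1, h2⟩ | ⟨h1, h2⟩
      · exact ⟨h1 ▸ he₁, h2 ▸ he₂⟩
      · exact ⟨h1 ▸ he₂, h2 ▸ he₁⟩
    have hEb : s(i, b) ∈ G.edgeSet ∧ s(i + 1, b + 1) ∈ G.edgeSet := by
      rcases hB with ⟨h1, h2⟩ | ⟨h1, h2⟩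
      · exact ⟨h1 ▸ hf₁, h2 ▸ hf₂⟩
      · exact ⟨h1 ▸ hf₂, h2 ▸ hf₁⟩
    have hLa : IsLegal n s(i, a) := by
      rcases hA with ⟨h1, _⟩ | ⟨h1, _⟩
      · exact h1 ▸ hd1.1
      · exact h1 ▸ hd1.2.1
    have hLb : IsLegal n s(i, b) := by
      rcases hB with ⟨h1, _⟩ | ⟨h1, _⟩
      · exact h1 ▸ hd2.1
      · exact h1 ▸ hd2.2.1
    have hpa : a.val % 2 = i.val % 2 := (legal_parity hLa).symm
    have hpb : b.val % 2 = i.val % 2 := (legal_parity hLb).symm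
    have hne : (a - i).val ≠ (b - i).val := by
      intro hv
      apply hab
      have : a - i = b - i := by
        rw [← cast_val_eq (a - i), ← cast_val_eq (b - i), hv]
      exact sub_left_injective this
    rcases Nat.lt_or_ge (a - i).val (b - i).val with hlt | hge
    · exact maincontr hN6 hN2 G c hC hmono halt i a b
        (G.mem_edgeSet.mp hEa.1) (G.mem_edgeSet.mp hEa.2) (G.mem_edgeSet.mp hEb.2)
        hpa hpb hlt
    · exact maincontr hN6 hN2 G c hC hmono halt i b a
        (G.mem_edgeSet.mp hEb.1) (G.mem_edgeSet.mp hEb.2) (G.mem_edgeSet.mp hEa.2)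
        hpb hpa (by omega)
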